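/- For every $i\in\{0,\dots,c(n)-1\}$ and every $x\in D_n$, one has $\phi_{n,i}(x)=(r_n|_{D_n})^{-1}\big(T_{\|r_n(\phi_{n,i}(x))\|}(r_n(x))\big)$. -/

import Mathlib

open Set

noncomputable section

variable {Γ : Type*} [TopologicalSpace Γ] [DiscreteTopology Γ]

/-- `ℓ∞(Γ)`: the Banach space of bounded real functions on `Γ`
(carrying the discrete topology, so that boundedness is the only constraint). -/
abbrev Linf (Γ : Type*) [TopologicalSpace Γ] [DiscreteTopology Γ] : Type _ :=
  BoundedContinuousFunction Γ ℝ

/-- The entire part of a real number, toward `0`: `[r] = sign(r)⌊|r|⌋`. -/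
def ent (r : ℝ) : ℝ := Real.sign r * ⌊|r|⌋

lemma abs_ent_le (r : ℝ) : |ent r| ≤ |r| := by
  have hsign : |Real.sign r| ≤ 1 := by
    rcases lt_trichotomy r 0 with h | h | h
    · rw [Real.sign_of_neg h]; norm_num
    · rw [h, Real.sign_zero]; norm_num
    · rw [Real.sign_of_pos h]; norm_num
  have hfl : |(⌊|r|⌋ : ℝ)| ≤ |r| := by
    rw [abs_of_nonneg (by exact_mod_cast Int.floor_nonneg.mpr (abs_nonneg r))]
    exact Int.floor_le _
  calc |ent r| = |Real.sign r| * |(⌊|r|⌋ : ℝ)| := abs_mul _ _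
    _ ≤ 1 * |r| := mul_le_mul hsign hfl (abs_nonneg _) zero_le_one
    _ = |r| := one_mul _

/-- The coordinatewise quantization `f : ℓ∞(S) → ℓ∞(S)`, `f(x)(γ) = [x(γ)]`. -/
def quant (x : Linf Γ) : Linf Γ :=
  BoundedContinuousFunction.ofNormedAddCommGroup (fun γ => ent (x γ))
    continuous_of_discreteTopology ‖x‖ (fun γ => by
      rw [Real.norm_eq_abs]
      exact (abs_ent_le (x γ)).trans (by simpa using x.norm_coe_le_norm γ))

/-- Scalar truncation at level `s`. -/
def truncFun (s t : ℝ) : ℝ := if |t| ≤ s then t else s * t / |t|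

lemma abs_truncFun_le (s t : ℝ) : |truncFun s t| ≤ max |s| |t| := by
  unfold truncFun
  split_ifs with h
  · exact le_max_right _ _
  · by_cases ht : t = 0
    · simp [ht]
    · have hst : abs (s * t / |t|) = |s| := by
        rw [abs_div, abs_mul, abs_abs, mul_div_assoc, div_self (abs_ne_zero.mpr ht), mul_one]
      rw [hst]; exact le_max_left _ _

/-- The truncation of radius `s`: `T_s(x)(γ) = x(γ)` if `|x(γ)| ≤ s`,
and `= s·x(γ)/|x(γ)|` otherwise. -/
def trunc (s : ℝ) (x : Linf Γ) : Linf Γ :=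
  BoundedContinuousFunction.ofNormedAddCommGroup (fun γ => truncFun s (x γ))
    continuous_of_discreteTopology (max |s| ‖x‖) (fun γ => by
      rw [Real.norm_eq_abs]
      exact (abs_truncFun_le s (x γ)).trans
        (max_le_max le_rfl (by simpa using x.norm_coe_le_norm γ)))

/-- The restriction operator `r_S : ℓ∞(Γ) → ℓ∞(S)`, where `ℓ∞(S)` is identified
isometrically with the subspace of `ℓ∞(Γ)` of functions vanishing off `S`. -/
def restr (S : Set Γ) (x : Linf Γ) : Linf Γ :=
  BoundedContinuousFunction.ofNormedAddCommGroup (S.indicator x)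
    continuous_of_discreteTopology ‖x‖ (fun γ => by
      rw [Real.norm_eq_abs]
      by_cases h : γ ∈ S
      · rw [Set.indicator_of_mem h]
        simpa using x.norm_coe_le_norm γ
      · rw [Set.indicator_of_notMem h]
        simp)

/-- The ball `s·B_{ℓ∞(S)}`, viewed inside `ℓ∞(Γ)`: functions supported on `S`
of norm at most `s`. -/
def suppBall (S : Set Γ) (s : ℝ) : Set (Linf Γ) :=
  {x | (∀ γ ∉ S, x γ = 0) ∧ ‖x‖ ≤ s}

/-- `chain T a b = T (a+1) ∘ ⋯ ∘ T b` (the identity if `b ≤ a`). -/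
def chain {α : Type*} (T : ℕ → α → α) (a b : ℕ) : α → α :=
  Nat.rec id (fun k ih => ih ∘ T (a + k + 1)) (b - a)

/-- Bourgain–Delbaen data on `Γ`: a strictly increasing sequence of nonempty finite
sets `Γs n` (for `n ≥ 1`) with union `Γ`, together with compatible bounded linear
extension operators `i n : ℓ∞(Γ_n) → ℓ∞(Γ)` (realized as operators on `ℓ∞(Γ)`
factoring through the restriction `restr (Γs n)`), with norms bounded by the
positive integer `lam`. -/
structure BD (Γ : Type*) [TopologicalSpace Γ] [DiscreteTopology Γ] where
  Γs : ℕ → Set Γ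
  lam : ℕ
  i : ℕ → Linf Γ →L[ℝ] Linf Γ
  one_le_lam : 1 ≤ lam
  finite : ∀ n, 1 ≤ n → (Γs n).Finite
  nonempty : ∀ n, 1 ≤ n → (Γs n).Nonempty
  ssubset : ∀ n, 1 ≤ n → Γs n ⊂ Γs (n + 1)
  iUnion_eq : ⋃ n ∈ {k : ℕ | 1 ≤ k}, Γs n = Set.univ
  extension : ∀ n, 1 ≤ n → ∀ x : Linf Γ, ∀ γ ∈ Γs n, i n x γ = x γ
  factor : ∀ n, 1 ≤ n → ∀ x : Linf Γ, i n (restr (Γs n) x) = i n x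
  compatible : ∀ n m, 1 ≤ n → n < m → ∀ x : Linf Γ, i m (restr (Γs m) (i n x)) = i n x
  norm_i_le : ∀ n, 1 ≤ n → ‖i n‖ ≤ (lam : ℝ)

namespace BD

/-- `s n = λ^n`. -/
def s (B : BD Γ) (n : ℕ) : ℝ := (B.lam : ℝ) ^ n

/-- The sets `M_n` (with `M_0 = ∅`):
`M_n = M_{n-1} ∪ (f ∘ i_n)(f(s_n B_{ℓ∞(Γ_n)}) \ r_n(M_{n-1}))`. -/
def M (B : BD Γ) : ℕ → Set (Linf Γ)
  | 0 => ∅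
  | n + 1 =>
      M B n ∪
        (fun z => quant (B.i (n + 1) z)) ''
          (quant '' suppBall (B.Γs (n + 1)) (B.s (n + 1)) \ restr (B.Γs (n + 1)) '' M B n)

/-- `M = ⋃ n, M_n`. -/
def Mtot (B : BD Γ) : Set (Linf Γ) := ⋃ n, B.M n

/-- `C_n = (f ∘ i_{n+1} ∘ f ∘ T_{s_{n+1}} ∘ r_{n+1} ∘ i_n)
(f(s_{n+1}B_{ℓ∞(Γ_n)}) \ f(s_n B_{ℓ∞(Γ_n)}))`. -/
def C (B : BD Γ) (n : ℕ) : Set (Linf Γ) :=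
  (fun z => quant (B.i (n + 1) (quant (trunc (B.s (n + 1)) (restr (B.Γs (n + 1)) (B.i n z)))))) ''
    (quant '' suppBall (B.Γs n) (B.s (n + 1)) \ quant '' suppBall (B.Γs n) (B.s n))

/-- `D_n = M_n ∪ C_n`. -/
def D (B : BD Γ) (n : ℕ) : Set (Linf Γ) := B.M n ∪ B.C n

end BD

/-! ### Auxiliary lemmas -/

section AuxEnt

lemma ent_intCast (v : ℤ) : ent ((v : ℤ) : ℝ) = (v : ℝ) := by
  unfold ent
  rcases lt_trichotomy v 0 with h | h | h
  · rw [Real.sign_of_neg (by exact_mod_cast h), ← Int.cast_abs, Int.floor_intCast]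
    push_cast [abs_of_neg h]; ring
  · simp [h]
  · rw [Real.sign_of_pos (by exact_mod_cast h), ← Int.cast_abs, Int.floor_intCast]
    push_cast [abs_of_pos h]; ring

lemma ent_exists (r : ℝ) : ∃ v : ℤ, ent r = (v : ℝ) := by
  unfold ent
  rcases lt_trichotomy r 0 with h | h | h
  · exact ⟨-⌊|r|⌋, by rw [Real.sign_of_neg h]; push_cast; ring⟩
  · exact ⟨0, by simp [h]⟩
  · exact ⟨⌊|r|⌋, by rw [Real.sign_of_pos h]; ring⟩

lemma ent_ent (r : ℝ) : ent (ent r) = ent r := by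
  obtain ⟨v, hv⟩ := ent_exists r
  rw [hv, ent_intCast]

variable {Γ : Type*} [TopologicalSpace Γ] [DiscreteTopology Γ]

lemma quant_apply (x : Linf Γ) (γ : Γ) : quant x γ = ent (x γ) := rfl

lemma restr_apply (S : Set Γ) (x : Linf Γ) (γ : Γ) : restr S x γ = S.indicator x γ := rfl

lemma trunc_apply (s : ℝ) (x : Linf Γ) (γ : Γ) : trunc s x γ = truncFun s (x γ) := rfl

lemma quant_quant (x : Linf Γ) : quant (quant x) = quant x := by
  ext γ
  exact ent_ent (x γ)

lemma norm_quant_le (x : Linf Γ) : ‖quant x‖ ≤ ‖x‖ := by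
  refine (BoundedContinuousFunction.norm_le (norm_nonneg x)).mpr fun γ => ?_
  rw [Real.norm_eq_abs, quant_apply]
  exact (abs_ent_le _).trans (by simpa using x.norm_coe_le_norm γ)

end AuxEnt

section AuxTrunc

lemma abs_truncFun_eq {s : ℝ} (hs : 0 ≤ s) (t : ℝ) : |truncFun s t| = min s |t| := by
  unfold truncFun
  split_ifs with h
  · exact (min_eq_right h).symm
  · push_neg at h
    have ht : t ≠ 0 := by
      intro h0
      rw [h0, abs_zero] at h
      linarith
    rw [abs_div, abs_mul, abs_abs, mul_div_assoc, div_self (abs_ne_zero.mpr ht), mul_one,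
      abs_of_nonneg hs]
    exact (min_eq_left h.le).symm

variable {Γ : Type*} [TopologicalSpace Γ] [DiscreteTopology Γ]

lemma norm_trunc_le {s : ℝ} (hs : 0 ≤ s) (y : Linf Γ) : ‖trunc s y‖ ≤ s := by
  refine (BoundedContinuousFunction.norm_le hs).mpr fun γ => ?_
  rw [Real.norm_eq_abs, trunc_apply, abs_truncFun_eq hs]
  exact min_le_left _ _

lemma trunc_norm_self (y : Linf Γ) : trunc ‖y‖ y = y := by
  ext γ
  rw [trunc_apply]
  exact if_pos (by simpa using y.norm_coe_le_norm γ)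

lemma truncFun_truncFun {s t : ℝ} (hs : 0 ≤ s) (hst : s ≤ t) (u : ℝ) :
    truncFun s (truncFun t u) = truncFun s u := by
  by_cases h1 : |u| ≤ t
  · rw [show truncFun t u = u from if_pos h1]
  · push_neg at h1
    have hu : u ≠ 0 := by
      intro h0
      rw [h0, abs_zero] at h1
      linarith
    have htu : truncFun t u = t * u / |u| := if_neg (not_le.mpr h1)
    have habs : |truncFun t u| = t := by
      rw [abs_truncFun_eq (hs.trans hst), min_eq_left h1.le]
    by_cases h2 : |truncFun t u| ≤ s
    · have hts : t = s := le_antisymm (habs ▸ h2) hst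
      rw [show truncFun s (truncFun t u) = truncFun t u from if_pos h2, htu, hts,
        show truncFun s u = s * u / |u| from if_neg (not_le.mpr (hts ▸ h1))]
    · push_neg at h2
      rw [habs] at h2
      have ht0 : (0:ℝ) < t := lt_of_le_of_lt hs h2
      rw [show truncFun s (truncFun t u) = s * truncFun t u / |truncFun t u| from
          if_neg (not_le.mpr (by rw [habs]; exact h2)), habs, htu,
        show truncFun s u = s * u / |u| from if_neg (not_le.mpr (lt_trans h2 h1))]
      field_simp

lemma trunc_trunc {s t : ℝ} (hs : 0 ≤ s) (hst : s ≤ t) (y : Linf Γ) :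
    trunc s (trunc t y) = trunc s y := by
  ext γ
  rw [trunc_apply, trunc_apply, trunc_apply]
  exact truncFun_truncFun hs hst (y γ)

lemma trunc_norm_trunc {s : ℝ} (hs : 0 ≤ s) (y : Linf Γ) :
    trunc ‖trunc s y‖ y = trunc s y := by
  have hus : ‖trunc s y‖ ≤ s := norm_trunc_le hs y
  ext γ
  rw [trunc_apply, trunc_apply]
  have hb : |truncFun s (y γ)| ≤ ‖trunc s y‖ := by
    simpa [Real.norm_eq_abs, trunc_apply] using (trunc s y).norm_coe_le_norm γ
  rw [abs_truncFun_eq hs] at hb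
  by_cases h : |y γ| ≤ ‖trunc s y‖
  · unfold truncFun
    rw [if_pos h, if_pos (h.trans hus)]
  · push_neg at h
    have hsu : s ≤ ‖trunc s y‖ := by
      rcases le_total s |y γ| with hc | hc
      · rwa [min_eq_left hc] at hb
      · rw [min_eq_right hc] at hb
        exact absurd hb (not_le.mpr h)
    rw [le_antisymm hus hsu]

end AuxTrunc

section AuxChain

lemma chain_self {α : Type*} (T : ℕ → α → α) (a : ℕ) : chain T a a = id := by
  unfold chain
  rw [Nat.sub_self]
  rfl

lemma chain_succ {α : Type*} (T : ℕ → α → α) (a k : ℕ) :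
    chain T a (a + k + 1) = chain T a (a + k) ∘ T (a + k + 1) := by
  have e1 : a + k + 1 - a = k + 1 := by omega
  have e2 : a + k - a = k := by omega
  unfold chain
  rw [e1, e2]

lemma chain_peel_left {α : Type*} (T : ℕ → α → α) :
    ∀ (m a : ℕ), chain T a (a + m + 1) = T (a + 1) ∘ chain T (a + 1) (a + m + 1) := by
  intro m
  induction m with
  | zero =>
    intro a
    rw [chain_succ T a 0, Nat.add_zero, chain_self, chain_self]
    rfl
  | succ m ih =>
    intro a
    rw [chain_succ T a (m + 1), show a + (m + 1) = a + m + 1 from by omega, ih a,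
      Function.comp_assoc]
    have h := chain_succ T (a + 1) m
    rw [show a + 1 + m = a + m + 1 from by omega] at h
    rw [h]

lemma chain_peel {α : Type*} (T : ℕ → α → α) {a b : ℕ} (h : a < b) :
    chain T a b = T (a + 1) ∘ chain T (a + 1) b := by
  obtain ⟨d, rfl⟩ : ∃ d, b = a + d + 1 := ⟨b - a - 1, by omega⟩
  exact chain_peel_left T d a

end AuxChain

section AuxC

variable {Γ : Type*} [TopologicalSpace Γ] [DiscreteTopology Γ]

lemma truncFun_int {S : ℝ} (hS : ∃ k : ℤ, S = (k : ℝ)) (m : ℤ) :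
    ∃ v : ℤ, truncFun S ((m : ℤ) : ℝ) = (v : ℝ) := by
  obtain ⟨k, rfl⟩ := hS
  unfold truncFun
  split_ifs with h
  · exact ⟨m, rfl⟩
  · by_cases hm : ((m : ℤ) : ℝ) = 0
    · exact ⟨0, by rw [hm]; simp⟩
    · rcases lt_or_gt_of_ne hm with hneg | hpos
      · refine ⟨-k, ?_⟩
        rw [abs_of_neg hneg, div_neg, mul_div_assoc, div_self hneg.ne, mul_one]
        push_cast
        ring
      · refine ⟨k, ?_⟩
        rw [abs_of_pos hpos, mul_div_assoc, div_self hpos.ne', mul_one]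

lemma one_le_norm_restr_of_mem_C (B : BD Γ) {n : ℕ} (hn : 1 ≤ n) {x : Linf Γ}
    (hx : x ∈ B.C n) : 1 ≤ ‖restr (B.Γs n) x‖ := by
  have hl : (1:ℝ) ≤ (B.lam : ℝ) := by exact_mod_cast B.one_le_lam
  have hs1 : (1:ℝ) ≤ B.s n := one_le_pow₀ hl
  have hs2 : (1:ℝ) ≤ B.s (n + 1) := one_le_pow₀ hl
  obtain ⟨z, ⟨hz1, hz2⟩, rfl⟩ := hx
  obtain ⟨w, ⟨hw0, hwn⟩, rfl⟩ := hz1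
  have hsupp : ∀ γ ∉ B.Γs n, quant w γ = 0 := fun γ hγ => by
    rw [quant_apply, hw0 γ hγ]
    simp [ent]
  have hgt : ¬ ‖quant w‖ ≤ B.s n := fun h => hz2 ⟨quant w, ⟨hsupp, h⟩, quant_quant w⟩
  obtain ⟨γ0, hγ0⟩ : ∃ γ, B.s n < |quant w γ| := by
    by_contra h
    push_neg at h
    exact hgt ((BoundedContinuousFunction.norm_le (by linarith)).mpr fun γ => by
      rw [Real.norm_eq_abs]; exact h γ)
  have hγm : γ0 ∈ B.Γs n := by
    by_contra h
    rw [hsupp γ0 h, abs_zero] at hγ0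
    linarith
  have hγm' : γ0 ∈ B.Γs (n + 1) := (B.ssubset n hn).1 hγm
  obtain ⟨m, hm⟩ := ent_exists (w γ0)
  have hqm : quant w γ0 = (m : ℝ) := by rw [quant_apply, hm]
  rw [hqm] at hγ0
  have hScast : ∃ k : ℤ, B.s (n + 1) = (k : ℝ) :=
    ⟨(B.lam : ℤ) ^ (n + 1), by rw [BD.s]; push_cast; ring⟩
  obtain ⟨v, hv⟩ := truncFun_int hScast m
  have h1v : 1 ≤ |truncFun (B.s (n + 1)) ((m : ℤ) : ℝ)| := by
    rw [abs_truncFun_eq (by linarith : (0:ℝ) ≤ B.s (n + 1))]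
    exact le_min hs2 (by linarith)
  have e1 : (B.i (n + 1)) (quant (trunc (B.s (n + 1)) (restr (B.Γs (n + 1)) (B.i n (quant w))))) γ0
      = quant (trunc (B.s (n + 1)) (restr (B.Γs (n + 1)) (B.i n (quant w)))) γ0 :=
    B.extension (n + 1) (by omega) _ γ0 hγm'
  have e2 : restr (B.Γs (n + 1)) (B.i n (quant w)) γ0 = (B.i n (quant w)) γ0 := by
    rw [restr_apply]
    exact Set.indicator_of_mem hγm' _
  have e3 : (B.i n (quant w)) γ0 = quant w γ0 := B.extension n hn _ γ0 hγm
  have hx0 : quant (B.i (n + 1)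
        (quant (trunc (B.s (n + 1)) (restr (B.Γs (n + 1)) (B.i n (quant w)))))) γ0
      = (v : ℝ) := by
    rw [quant_apply, e1, quant_apply, trunc_apply, e2, e3, hqm, hv, ent_intCast, ent_intCast]
  have hpt : 1 ≤ |restr (B.Γs n)
      (quant (B.i (n + 1)
        (quant (trunc (B.s (n + 1)) (restr (B.Γs (n + 1)) (B.i n (quant w))))))) γ0| := by
    rw [restr_apply, Set.indicator_of_mem hγm, hx0, ← hv]
    exact h1v
  exact hpt.trans (by rw [← Real.norm_eq_abs]
                      exact BoundedContinuousFunction.norm_coe_le_norm _ γ0)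

end AuxC

/-- Lemma 13 (`defstep4`): `φ_{n,i}(x) = (r_n|_{D_n})⁻¹(T_{‖r_n(φ_{n,i}(x))‖}(r_n(x)))`
for every `i ∈ {0,…,c(n)-1}` and `x ∈ D_n`, where `φ_{n,i} = T_{n,i+1} ∘ ⋯ ∘ T_{n,c(n)}`. -/
theorem phi_ni_formula (B : BD Γ) (n : ℕ) (hn : 1 ≤ n)
    (N : ℕ) (c : ℕ → Linf Γ)
    (hc_inj : Set.InjOn c (Set.Icc 1 N))
    (hc_range : c '' Set.Icc 1 N = B.C n)
    (hc_mono : ∀ i j, 1 ≤ i → i ≤ j → j ≤ N →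
      ‖restr (B.Γs n) (c i)‖ ≤ ‖restr (B.Γs n) (c j)‖)
    (T : ℕ → Linf Γ → Linf Γ)
    (hT_val : ∀ i, 1 ≤ i → i ≤ N → T i (c i) ∈ B.D n ∧
      restr (B.Γs n) (T i (c i)) =
        trunc (‖restr (B.Γs n) (c i)‖ - 1) (restr (B.Γs n) (c i)))
    (hT_id : ∀ i, 1 ≤ i → i ≤ N →
      ∀ z ∈ B.M n ∪ c '' Set.Icc 1 i, z ≠ c i → T i z = z)
    : ∀ i, i < N → ∀ x ∈ B.D n,
      chain T i N x ∈ B.D n ∧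
      restr (B.Γs n) (chain T i N x) =
        trunc ‖restr (B.Γs n) (chain T i N x)‖ (restr (B.Γs n) x) := by
  have key : ∀ m, m ≤ N → ∀ x ∈ B.D n,
      chain T (N - m) N x ∈ B.M n ∪ c '' Set.Icc 1 (N - m) ∧
      restr (B.Γs n) (chain T (N - m) N x) =
        trunc ‖restr (B.Γs n) (chain T (N - m) N x)‖ (restr (B.Γs n) x) := by
    intro m
    induction m with
    | zero =>
      intro _ x hx
      rw [Nat.sub_zero, chain_self T N]
      refine ⟨?_, (trunc_norm_self _).symm⟩
      show x ∈ B.M n ∪ c '' Set.Icc 1 N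
      rw [hc_range]
      exact hx
    | succ m ih =>
      intro hm x hx
      obtain ⟨w_mem, w_eq⟩ := ih (by omega) x hx
      set i := N - (m + 1) with hidef
      have hi1 : N - m = i + 1 := by omega
      rw [hi1] at w_mem w_eq
      have hiN : i < N := by omega
      have hm1 : 1 ≤ i + 1 := by omega
      have hm2 : i + 1 ≤ N := by omega
      have hstep : chain T i N x = T (i + 1) (chain T (i + 1) N x) := by
        rw [chain_peel T hiN]
        rfl
      by_cases hcw : chain T (i + 1) N x = c (i + 1)
      · obtain ⟨hTmem, hTval⟩ := hT_val (i + 1) hm1 hm2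
        have hcC : c (i + 1) ∈ B.C n := by
          rw [← hc_range]
          exact ⟨i + 1, ⟨hm1, hm2⟩, rfl⟩
        have h1 : 1 ≤ ‖restr (B.Γs n) (c (i + 1))‖ := one_le_norm_restr_of_mem_C B hn hcC
        rw [hcw] at w_eq
        set t := ‖restr (B.Γs n) (c (i + 1))‖ with htdef
        have key_eq : restr (B.Γs n) (chain T i N x)
            = trunc (t - 1) (restr (B.Γs n) x) := by
          rw [hstep, hcw, hTval, w_eq, trunc_trunc (by linarith) (by linarith)]
        refine ⟨?_, ?_⟩
        · rw [hstep, hcw]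
          rcases (show T (i + 1) (c (i + 1)) ∈ B.M n ∪ B.C n from hTmem) with hM | hC
          · exact Or.inl hM
          · rw [← hc_range] at hC
            obtain ⟨k, hk, hck⟩ := hC
            have hlt : ‖restr (B.Γs n) (T (i + 1) (c (i + 1)))‖ < t := by
              rw [hTval]
              have := norm_trunc_le (show (0:ℝ) ≤ t - 1 by linarith)
                (restr (B.Γs n) (c (i + 1)))
              linarith
            have hk_le : k ≤ i := by
              by_contra hk'
              push_neg at hk'
              have hmono := hc_mono (i + 1) k hm1 (by omega) hk.2
              rw [← htdef, hck] at hmono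
              linarith
            exact Or.inr ⟨k, ⟨hk.1, hk_le⟩, hck⟩
        · rw [key_eq]
          exact (trunc_norm_trunc (by linarith) _).symm
      · have hstep' : chain T i N x = chain T (i + 1) N x := by
          rw [hstep]
          exact hT_id (i + 1) hm1 hm2 _ w_mem hcw
        refine ⟨?_, ?_⟩
        · rw [hstep']
          rcases w_mem with hM | ⟨k, hk, hck⟩
          · exact Or.inl hM
          · have hk_le : k ≤ i := by
              rcases eq_or_lt_of_le hk.2 with he | hlt
              · exact absurd (by rw [← hck, he]) hcw
              · omega
            exact Or.inr ⟨k, ⟨hk.1, hk_le⟩, hck⟩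
        · rw [hstep']
          exact w_eq
  intro i hiN x hx
  have h := key (N - i) (by omega) x hx
  rw [show N - (N - i) = i from by omega] at h
  refine ⟨?_, h.2⟩
  rcases h.1 with hM | hC
  · exact Or.inl hM
  · refine Or.inr ?_
    rw [← hc_range]
    exact Set.image_mono (Set.Icc_subset_Icc_right (by omega)) hC
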